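/- For every (x,y) ∈ ℤ² with (x,y) not of the form (m,m) for some nonnegative integer m, the forward orbit {Hⁿ((x,y)) : n ∈ ℕ} is unbounded (infinite). -/
import Mathlib


def H (p : ℤ × ℤ) : ℤ × ℤ :=
  if 0 ≤ p.2 then (p.2, -p.1 + 2 * p.2) else (p.2, -p.1 + 2 * p.2 + 1)

lemma Hinj : Function.Injective H := by
  rintro ⟨a1, a2⟩ ⟨b1, b2⟩ hab
  simp only [H] at hab
  split_ifs at hab <;> simp_all [Prod.ext_iff] <;> omega

lemma Hstep (q : ℤ × ℤ) :
    (H q).2 - (H q).1 = q.2 - q.1 + (if 0 ≤ q.2 then 0 else 1) := by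
  unfold H; split <;> simp <;> ring

lemma Hsnd (q : ℤ × ℤ) (hq : 0 ≤ q.2) : (H q).2 = q.2 + (q.2 - q.1) := by
  unfold H; rw [if_pos hq]; ring

lemma Hstep' (p : ℤ × ℤ) (n : ℕ) :
    (H^[n + 1] p).2 - (H^[n + 1] p).1 =
      (H^[n] p).2 - (H^[n] p).1 + (if 0 ≤ (H^[n] p).2 then 0 else 1) := by
  rw [Function.iterate_succ_apply']
  exact Hstep (H^[n] p)

lemma Hmono (p : ℤ × ℤ) : ∀ m n : ℕ, m ≤ n →
    (H^[m] p).2 - (H^[m] p).1 ≤ (H^[n] p).2 - (H^[n] p).1 := by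
  intro m n hmn
  induction n with
  | zero => simp_all
  | succ k ih =>
    rcases Nat.lt_or_ge m (k + 1) with h' | h'
    · have := ih (by omega)
      have hs := Hstep' p k
      split_ifs at hs <;> omega
    · have : m = k + 1 := by omega
      subst this; exact le_rfl

theorem stmt4 (x y : ℤ) (h : ¬ ∃ m : ℤ, 0 ≤ m ∧ (x, y) = (m, m)) :
    Set.Infinite (Set.range fun n : ℕ => H^[n] (x, y)) := by
  by_contra hf
  rw [Set.not_infinite] at hf
  have hni : ¬ Function.Injective (fun n : ℕ => H^[n] (x, y)) := fun hi =>
    (Set.infinite_range_of_injective hi) hf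
  rw [Function.not_injective_iff] at hni
  obtain ⟨m, n, heq, hmn⟩ := hni
  obtain ⟨a, b, hab, hper⟩ : ∃ a b : ℕ, 0 < b ∧ H^[a + b] (x, y) = H^[a] (x, y) := by
    rcases hmn.lt_or_gt with h' | h'
    · exact ⟨m, n - m, by omega, by rw [Nat.add_sub_cancel' h'.le]; exact heq.symm⟩
    · exact ⟨n, m - n, by omega, by rw [Nat.add_sub_cancel' h'.le]; exact heq⟩
  have hkey : H^[b] (x, y) = (x, y) := by
    have : H^[a] (H^[b] (x, y)) = H^[a] (x, y) := by
      rw [← Function.iterate_add_apply]; exact hper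
    exact Hinj.iterate a this
  have hconst : ∀ n ≤ b, (H^[n] (x, y)).2 - (H^[n] (x, y)).1 = y - x := by
    intro n hn
    have h1 := Hmono (x, y) 0 n (Nat.zero_le n)
    have h2 := Hmono (x, y) n b hn
    rw [hkey] at h2
    simp only [Function.iterate_zero, id_eq] at h1
    omega
  have hpos : ∀ n < b, 0 ≤ (H^[n] (x, y)).2 := by
    intro n hn
    by_contra hneg
    push_neg at hneg
    have hs := Hstep' (x, y) n
    rw [if_neg (by omega)] at hs
    have e1 := hconst n hn.le
    have e2 := hconst (n + 1) hn
    omega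
  have hy : ∀ n ≤ b, (H^[n] (x, y)).2 = y + n * (y - x) := by
    intro n hn
    induction n with
    | zero => simp
    | succ k ih =>
      have hk : k < b := hn
      have h0 := hpos k hk
      have hs := Hsnd (H^[k] (x, y)) h0
      rw [← Function.iterate_succ_apply' H k (x, y)] at hs
      have e1 := hconst k hk.le
      have ihk := ih (by omega)
      rw [hs, e1, ihk]
      push_cast
      ring
  have hyb := hy b le_rfl
  rw [hkey] at hyb
  have hb0 : (b : ℤ) ≠ 0 := by exact_mod_cast hab.ne'
  have hxy : y = x := by
    have hz : (b : ℤ) * (y - x) = 0 := by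
      have : (x, y).2 = y := rfl
      omega
    rcases mul_eq_zero.mp hz with h' | h'
    · exact absurd h' hb0
    · omega
  have h0 : 0 ≤ y := hpos 0 hab
  exact h ⟨x, by omega, by rw [Prod.mk.injEq]; exact ⟨rfl, hxy⟩⟩
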